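/- Let λ > 0, let B, B̃ ∈ ℝ^{D×D} be symmetric positive-semidefinite matrices, and set H = B + λ I_D and H̃ = B̃ + λ I_D (both positive definite). Suppose 𝓑 ⊆ ℝ^D is a linear subspace with H v = H̃ v for all v ∈ 𝓑, and let 𝓐 = H(𝓑) be its image under H. Then: (i) H⁻¹ w = H̃⁻¹ w for all w ∈ 𝓐; and (ii) for every x ∈ ℝ^D, |xᵀ H̃⁻¹ x − xᵀ H⁻¹ x| ≤ ‖P_{𝓐}^⊥ x‖₂² / λ, where P_{𝓐}^⊥ denotes the orthogonal projection onto the orthogonal complement of 𝓐. -/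

import Mathlib

open Matrix BigOperators RealInnerProductSpace

private lemma dp_self_nonneg {D : ℕ} (x : Fin D → ℝ) : 0 ≤ x ⬝ᵥ x :=
  Finset.sum_nonneg fun i _ => mul_self_nonneg _

private lemma norm_eq_sqrt_dp {D : ℕ} (x : EuclideanSpace ℝ (Fin D)) :
    ‖x‖ = Real.sqrt (x ⬝ᵥ x) := by
  rw [← Real.sqrt_sq (norm_nonneg x), ← real_inner_self_eq_norm_sq]
  congr 1

private lemma posdef_aux {D : ℕ} {lam : ℝ} (hlam : 0 < lam)
    {B : Matrix (Fin D) (Fin D) ℝ} (hB : B.PosSemidef) :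
    (B + lam • 1).PosDef := by
  refine Matrix.PosDef.posSemidef_add hB (Matrix.PosDef.of_dotProduct_mulVec_pos (by simp [Matrix.IsHermitian]) fun x hx => ?_)
  rw [smul_mulVec, one_mulVec, dotProduct_smul, smul_eq_mul]
  have : (0:ℝ) < star x ⬝ᵥ x := by
    simpa using Matrix.dotProduct_star_self_pos_iff.mpr hx
  exact mul_pos hlam this

private lemma quad_bounds {D : ℕ} {lam : ℝ} (hlam : 0 < lam)
    {B : Matrix (Fin D) (Fin D) ℝ} (hB : B.PosSemidef)
    (x : Fin D → ℝ) :
    0 ≤ x ⬝ᵥ ((B + lam • 1)⁻¹ *ᵥ x) ∧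
      x ⬝ᵥ ((B + lam • 1)⁻¹ *ᵥ x) ≤ (x ⬝ᵥ x) / lam := by
  set H := B + lam • 1 with hH
  have hpd : H.PosDef := posdef_aux hlam hB
  have hinv : Invertible H := hpd.isUnit.invertible
  set y : Fin D → ℝ := H⁻¹ *ᵥ x with hy
  have hxy : H *ᵥ y = x := by
    rw [hy, mulVec_mulVec, Matrix.mul_inv_of_invertible, one_mulVec]
  have hnn : 0 ≤ x ⬝ᵥ y := by
    have := hpd.inv.posSemidef.dotProduct_mulVec_nonneg x
    simpa using this
  refine ⟨hnn, ?_⟩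
  have hlow : lam * (y ⬝ᵥ y) ≤ y ⬝ᵥ x := by
    have heq : y ⬝ᵥ (H *ᵥ y) = y ⬝ᵥ (B *ᵥ y) + lam * (y ⬝ᵥ y) := by
      rw [hH, add_mulVec, dotProduct_add, smul_mulVec, one_mulVec, dotProduct_smul,
        smul_eq_mul]
    have hBnn : 0 ≤ y ⬝ᵥ (B *ᵥ y) := by simpa using hB.dotProduct_mulVec_nonneg y
    rw [hxy] at heq
    linarith
  have hcs : y ⬝ᵥ x ≤ Real.sqrt (y ⬝ᵥ y) * Real.sqrt (x ⬝ᵥ x) := by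
    let y' : EuclideanSpace ℝ (Fin D) := WithLp.toLp 2 y
    let x' : EuclideanSpace ℝ (Fin D) := WithLp.toLp 2 x
    have h1 : (inner ℝ y' x' : ℝ) = y ⬝ᵥ x := by simp [x', y', PiLp.inner_apply, dotProduct, mul_comm]
    calc y ⬝ᵥ x = (inner ℝ y' x' : ℝ) := h1.symm
      _ ≤ ‖y'‖ * ‖x'‖ := real_inner_le_norm y' x'
      _ = _ := by rw [norm_eq_sqrt_dp y', norm_eq_sqrt_dp x']
  set n := Real.sqrt (y ⬝ᵥ y) with hn
  set m := Real.sqrt (x ⬝ᵥ x) with hm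
  have hn0 : 0 ≤ n := Real.sqrt_nonneg _
  have hm0 : 0 ≤ m := Real.sqrt_nonneg _
  have hnsq : n ^ 2 = y ⬝ᵥ y := Real.sq_sqrt (dp_self_nonneg y)
  have hmsq : m ^ 2 = x ⬝ᵥ x := Real.sq_sqrt (dp_self_nonneg x)
  have hxycomm : x ⬝ᵥ y = y ⬝ᵥ x := dotProduct_comm x y
  rcases eq_or_lt_of_le hn0 with h | h
  · have hyy : y ⬝ᵥ y = 0 := by rw [← hnsq, ← h]; ring
    have hy0 : y = 0 := dotProduct_self_eq_zero.mp hyy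
    rw [hxycomm, hy0]
    simp only [zero_dotProduct]
    exact div_nonneg (dp_self_nonneg x) hlam.le
  · have h1 : lam * n ^ 2 ≤ n * m := by
      calc lam * n ^ 2 = lam * (y ⬝ᵥ y) := by rw [hnsq]
        _ ≤ y ⬝ᵥ x := hlow
        _ ≤ n * m := hcs
    have h2 : lam * n ≤ m := by nlinarith
    calc x ⬝ᵥ y = y ⬝ᵥ x := hxycomm
      _ ≤ n * m := hcs
      _ ≤ (m / lam) * m := by
          apply mul_le_mul_of_nonneg_right _ hm0
          rw [le_div_iff₀ hlam]; linarith
      _ = (x ⬝ᵥ x) / lam := by rw [← hmsq]; ring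

private lemma symm_dp {D : ℕ} {A : Matrix (Fin D) (Fin D) ℝ} (hA : A.IsHermitian)
    (u v : Fin D → ℝ) : u ⬝ᵥ (A *ᵥ v) = (A *ᵥ u) ⬝ᵥ v := by
  have hT : Aᵀ = A := by
    ext i j
    have := congrFun (congrFun hA i) j
    simpa [Matrix.conjTranspose_apply] using this
  rw [Matrix.dotProduct_mulVec, ← Matrix.mulVec_transpose, hT]

theorem stmt_12
    (D : ℕ) (lam : ℝ) (hlam : 0 < lam)
    (B Bt : Matrix (Fin D) (Fin D) ℝ) (hB : B.PosSemidef) (hBt : Bt.PosSemidef)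
    (H Ht : Matrix (Fin D) (Fin D) ℝ)
    (hH : H = B + lam • 1) (hHt : Ht = Bt + lam • 1)
    (𝓑 : Submodule ℝ (EuclideanSpace ℝ (Fin D)))
    (hagree : ∀ v ∈ 𝓑, H *ᵥ v = Ht *ᵥ v)
    (𝓐 : Submodule ℝ (EuclideanSpace ℝ (Fin D)))
    (h𝓐 : 𝓐 = 𝓑.map (Matrix.toEuclideanLin H)) :
    (∀ w ∈ 𝓐, H⁻¹ *ᵥ w = Ht⁻¹ *ᵥ w) ∧
    (∀ x : EuclideanSpace ℝ (Fin D),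
      |x ⬝ᵥ (Ht⁻¹ *ᵥ x) - x ⬝ᵥ (H⁻¹ *ᵥ x)| ≤
        ‖(𝓐ᗮ.orthogonalProjectionOnto x : EuclideanSpace ℝ (Fin D))‖ ^ 2 / lam) := by
  have hHpd : H.PosDef := hH ▸ posdef_aux hlam hB
  have hHtpd : Ht.PosDef := hHt ▸ posdef_aux hlam hBt
  have hinvH : Invertible H := hHpd.isUnit.invertible
  have hinvHt : Invertible Ht := hHtpd.isUnit.invertible
  have part1 : ∀ w ∈ 𝓐, H⁻¹ *ᵥ w = Ht⁻¹ *ᵥ w := by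
    intro w hw
    rw [h𝓐, Submodule.mem_map] at hw
    obtain ⟨v, hv, rfl⟩ := hw
    show H⁻¹ *ᵥ (H *ᵥ v) = Ht⁻¹ *ᵥ (H *ᵥ v)
    conv_rhs => rw [hagree v hv]
    rw [mulVec_mulVec, mulVec_mulVec, Matrix.inv_mul_of_invertible,
      Matrix.inv_mul_of_invertible]
  refine ⟨part1, fun x => ?_⟩
  set b : EuclideanSpace ℝ (Fin D) := (𝓐ᗮ.orthogonalProjectionOnto x : EuclideanSpace ℝ (Fin D))
    with hbdef
  set a : EuclideanSpace ℝ (Fin D) := x - b with hadef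
  have hamem : a ∈ 𝓐 := by
    have h1 : x - b ∈ 𝓐ᗮᗮ := Submodule.sub_starProjection_mem_orthogonal (K := 𝓐ᗮ) x
    rwa [Submodule.orthogonal_orthogonal, ← hadef] at h1
  set u : Fin D → ℝ := a.ofLp with hudef
  set v : Fin D → ℝ := b.ofLp with hvdef
  have hxuv : (x : Fin D → ℝ) = u + v := by
    funext i
    show x i = (x i - v i) + v i
    ring
  have hMa : H⁻¹ *ᵥ u = Ht⁻¹ *ᵥ u := part1 a hamem
  have hsymH : H⁻¹.IsHermitian := hHpd.isHermitian.inv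
  have hsymHt : Ht⁻¹.IsHermitian := hHtpd.isHermitian.inv
  have hdiff : x ⬝ᵥ (Ht⁻¹ *ᵥ x) - x ⬝ᵥ (H⁻¹ *ᵥ x)
      = v ⬝ᵥ (Ht⁻¹ *ᵥ v) - v ⬝ᵥ (H⁻¹ *ᵥ v) := by
    have e1 : u ⬝ᵥ (Ht⁻¹ *ᵥ u) = u ⬝ᵥ (H⁻¹ *ᵥ u) := by rw [← hMa]
    have e2 : v ⬝ᵥ (Ht⁻¹ *ᵥ u) = v ⬝ᵥ (H⁻¹ *ᵥ u) := by rw [← hMa]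
    have e3 : u ⬝ᵥ (Ht⁻¹ *ᵥ v) = u ⬝ᵥ (H⁻¹ *ᵥ v) := by
      rw [symm_dp hsymHt, symm_dp hsymH, ← hMa]
    calc x ⬝ᵥ (Ht⁻¹ *ᵥ x) - x ⬝ᵥ (H⁻¹ *ᵥ x)
        = (u + v) ⬝ᵥ (Ht⁻¹ *ᵥ (u + v)) - (u + v) ⬝ᵥ (H⁻¹ *ᵥ (u + v)) := by rw [← hxuv]
      _ = (u ⬝ᵥ (Ht⁻¹ *ᵥ u) + u ⬝ᵥ (Ht⁻¹ *ᵥ v) + v ⬝ᵥ (Ht⁻¹ *ᵥ u) + v ⬝ᵥ (Ht⁻¹ *ᵥ v))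
          - (u ⬝ᵥ (H⁻¹ *ᵥ u) + u ⬝ᵥ (H⁻¹ *ᵥ v) + v ⬝ᵥ (H⁻¹ *ᵥ u) + v ⬝ᵥ (H⁻¹ *ᵥ v)) := by
            rw [Matrix.mulVec_add, Matrix.mulVec_add, add_dotProduct,
              add_dotProduct, dotProduct_add, dotProduct_add,
              dotProduct_add, dotProduct_add]
            ring
      _ = v ⬝ᵥ (Ht⁻¹ *ᵥ v) - v ⬝ᵥ (H⁻¹ *ᵥ v) := by rw [e1, e2, e3]; ring
  have hq1 := quad_bounds hlam hB v
  have hq2 := quad_bounds hlam hBt v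
  rw [← hH] at hq1
  rw [← hHt] at hq2
  have hnb : ‖b‖ ^ 2 = v ⬝ᵥ v := by
    rw [norm_eq_sqrt_dp b, Real.sq_sqrt (dp_self_nonneg v)]
  rw [hdiff, hnb, abs_le]
  constructor
  · have := hq2.1
    have := hq1.2
    linarith
  · have := hq1.1
    have := hq2.2
    linarith
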